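/- Lower bound on winning probability: in the K-stage coupon lottery with M participants, if agent 1 holds r_min coupons and each opponent holds at most r_max coupons (with 0 < r_min ≤ r_max), then agent 1's winning probability is at least 1 − (1 − r_min/(r_min + (M−1) r_max))^K, which lies in (0,1). -/

import Mathlib

/-- Probability that an agent with coupon count `r` fails to be among the first `K`
winners of a Plackett-Luce lottery against opponents with coupon counts `opp`. -/
noncomputable def lossProb (r : ℝ) : ℕ → List ℝ → ℝ
  | 0, _ => 1
  | K + 1, opp =>
      ∑ i ∈ Finset.range opp.length,
        (opp.getD i 0 / (r + opp.sum)) * lossProb r K (opp.eraseIdx i)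

lemma sum_getD (l : List ℝ) : ∑ i ∈ Finset.range l.length, l.getD i 0 = l.sum := by
  induction l with
  | nil => simp
  | cons a t ih =>
      rw [List.length_cons, Finset.sum_range_succ']
      simp only [List.getD_cons_succ, List.getD_cons_zero, List.sum_cons, ih]
      ring

lemma lossProb_nonneg (r : ℝ) (hr : 0 ≤ r) :
    ∀ K (opp : List ℝ), (∀ c ∈ opp, 0 ≤ c) → 0 ≤ lossProb r K opp := by
  intro K
  induction K with
  | zero => intro opp _; simp [lossProb]
  | succ K ih =>
      intro opp hopp
      rw [lossProb]
      apply Finset.sum_nonneg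
      intro i hi
      rw [Finset.mem_range] at hi
      have h1 : 0 ≤ opp.getD i 0 := by
        rw [List.getD_eq_get opp 0 ⟨i, hi⟩]
        exact hopp _ (List.get_mem opp ⟨i, hi⟩)
      have h2 : 0 ≤ opp.sum := List.sum_nonneg hopp
      exact mul_nonneg (div_nonneg h1 (by linarith))
        (ih _ fun c hc => hopp c (List.eraseIdx_subset hc))

lemma loss_le (rmin rmax : ℝ) (h0 : 0 < rmin) (hmm : rmin ≤ rmax) (N : ℕ) :
    ∀ K (opp : List ℝ), (∀ c ∈ opp, c ∈ Set.Icc rmin rmax) → opp.length ≤ N →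
      lossProb rmin K opp ≤ ((N * rmax) / (rmin + N * rmax)) ^ K := by
  have hrmax : 0 < rmax := lt_of_lt_of_le h0 hmm
  have hNr : (0:ℝ) ≤ N * rmax := by positivity
  have hD : 0 < rmin + N * rmax := by linarith
  intro K
  induction K with
  | zero => intro opp _ _; simp [lossProb]
  | succ K ih =>
      intro opp hopp hlen
      rw [lossProb]
      have hnon : ∀ c ∈ opp, 0 ≤ c := fun c hc => le_trans h0.le (hopp c hc).1
      have hS : 0 ≤ opp.sum := List.sum_nonneg hnon
      have hDS : 0 < rmin + opp.sum := by linarith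
      calc ∑ i ∈ Finset.range opp.length,
            (opp.getD i 0 / (rmin + opp.sum)) * lossProb rmin K (opp.eraseIdx i)
          ≤ ∑ i ∈ Finset.range opp.length,
            (opp.getD i 0 / (rmin + opp.sum)) * ((N * rmax) / (rmin + N * rmax)) ^ K := by
            apply Finset.sum_le_sum
            intro i hi
            rw [Finset.mem_range] at hi
            have h1 : 0 ≤ opp.getD i 0 := by
              rw [List.getD_eq_get opp 0 ⟨i, hi⟩]
              exact hnon _ (List.get_mem opp ⟨i, hi⟩)
            apply mul_le_mul_of_nonneg_left _ (div_nonneg h1 hDS.le)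
            exact ih _ (fun c hc => hopp c (List.eraseIdx_subset hc))
              (le_trans (List.length_eraseIdx_le _ _) hlen)
        _ = (opp.sum / (rmin + opp.sum)) * ((N * rmax) / (rmin + N * rmax)) ^ K := by
            rw [← Finset.sum_mul, ← Finset.sum_div, sum_getD]
        _ ≤ ((N * rmax) / (rmin + N * rmax)) * ((N * rmax) / (rmin + N * rmax)) ^ K := by
            apply mul_le_mul_of_nonneg_right _ (by positivity)
            rw [div_le_div_iff₀ hDS hD]
            have hsum : opp.sum ≤ N * rmax := by
              have h1 : opp.sum ≤ opp.length • rmax :=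
                List.sum_le_card_nsmul opp rmax (fun c hc => (hopp c hc).2)
              have h2 : (opp.length:ℝ) * rmax ≤ N * rmax := by
                apply mul_le_mul_of_nonneg_right _ hrmax.le
                exact_mod_cast hlen
              calc opp.sum ≤ (opp.length:ℝ) * rmax := by simpa using h1
                _ ≤ N * rmax := h2
            nlinarith
        _ = ((N * rmax) / (rmin + N * rmax)) ^ (K + 1) := by ring

/-- Lower bound on the winning probability: if agent 1 holds `rmin` coupons and every
one of the `M - 1` opponents holds between `rmin` and `rmax` coupons
(`0 < rmin ≤ rmax`), then agent 1's probability of being among the first `K` winners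
(`1 ≤ K < M`) is at least `1 - (1 - rmin/(rmin + (M-1)·rmax))^K`,
a quantity lying in `(0,1)`. -/
theorem winProb_lower_bound (M K : ℕ) (hK1 : 1 ≤ K) (hK : K < M) (rmin rmax : ℝ)
    (h0 : 0 < rmin) (hmm : rmin ≤ rmax) (opp : List ℝ) (hlen : opp.length = M - 1)
    (hopp : ∀ c ∈ opp, c ∈ Set.Icc rmin rmax) :
    1 - (1 - rmin / (rmin + (M - 1 : ℝ) * rmax)) ^ K ≤ 1 - lossProb rmin K opp ∧
    1 - (1 - rmin / (rmin + (M - 1 : ℝ) * rmax)) ^ K ∈ Set.Ioo (0 : ℝ) 1 := by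
  have hrmax : 0 < rmax := lt_of_lt_of_le h0 hmm
  have hM2 : 2 ≤ M := lt_of_le_of_lt hK1 hK
  have hMc : ((M - 1 : ℕ) : ℝ) = (M - 1 : ℝ) := by
    push_cast [Nat.cast_sub (by omega : 1 ≤ M)]; ring
  have hM1 : (1:ℝ) ≤ (M - 1 : ℝ) := by
    rw [← hMc]; exact_mod_cast (by omega : 1 ≤ M - 1)
  have hD : 0 < rmin + (M - 1 : ℝ) * rmax := by nlinarith
  have hq : 1 - rmin / (rmin + (M - 1 : ℝ) * rmax)
      = ((M - 1 : ℝ) * rmax) / (rmin + (M - 1 : ℝ) * rmax) := by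
    field_simp
    ring
  have hq0 : 0 < 1 - rmin / (rmin + (M - 1 : ℝ) * rmax) := by
    rw [hq]; positivity
  have hq1 : 1 - rmin / (rmin + (M - 1 : ℝ) * rmax) < 1 := by
    rw [hq, div_lt_one hD]; linarith
  constructor
  · have := loss_le rmin rmax h0 hmm (M - 1) K opp hopp (by omega)
    rw [hq, ← hMc]
    linarith
  · constructor
    · have := pow_lt_one₀ hq0.le hq1 (by omega : K ≠ 0)
      linarith
    · have := pow_pos hq0 K
      linarith
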